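/- Let G be an m×m real symmetric matrix with spectral decomposition G = Q Λ Qᵀ, where Q is orthogonal and Λ = diag(λ₁,…,λ_m). Then the matrix exponential map exp : Matrix(m,m,ℝ) → Matrix(m,m,ℝ) is Fréchet differentiable at G, and its derivative applied to any m×m real matrix H equals Q (Φ ∘ (Qᵀ H Q)) Qᵀ, where ∘ denotes the Hadamard (entrywise) product and Φ is the m×m matrix with entries Φ_{jk} = e^{λ_j} if λ_j = λ_k and Φ_{jk} = (e^{λ_j} − e^{λ_k})/(λ_j − λ_k) if λ_j ≠ λ_k. -/

import Mathlib

open Matrix NormedSpace Filter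
open scoped NNReal

namespace DaleckiiKrein


variable {m : ℕ}

attribute [local instance] Matrix.linftyOpNormedRing Matrix.linftyOpNormedAlgebra

/-- The Fréchet derivative of the matrix exponential (w.r.t. the `L∞`-operator norm). -/
noncomputable def L (A : Matrix (Fin m) (Fin m) ℝ) :
    Matrix (Fin m) (Fin m) ℝ →L[ℝ] Matrix (Fin m) (Fin m) ℝ :=
  fderiv ℝ (exp) A

lemma hasFDerivAt_exp (A : Matrix (Fin m) (Fin m) ℝ) :
    HasFDerivAt (exp) (L A) A :=
  ((exp_analytic A).differentiableAt).hasFDerivAt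

lemma contDiff_exp : ContDiff ℝ 1 (exp : Matrix (Fin m) (Fin m) ℝ → _) :=
  contDiff_iff_contDiffAt.2 fun A => (exp_analytic A).contDiffAt

lemma continuous_L : Continuous (L (m := m)) :=
  contDiff_exp.continuous_fderiv one_ne_zero

lemma L_zero : L (0 : Matrix (Fin m) (Fin m) ℝ) = ContinuousLinearMap.id ℝ _ :=
  hasFDerivAt_exp_zero.fderiv

lemma exp_diag (lam : Fin m → ℝ) :
    exp (diagonal lam) = diagonal (fun i => Real.exp (lam i)) := by
  rw [Matrix.exp_diagonal]
  funext i
  rw [Pi.exp_def, Real.exp_eq_exp_ℝ]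

lemma smul_diag (s : ℝ) (lam : Fin m → ℝ) :
    s • diagonal lam = diagonal (fun i => s * lam i) := by
  ext a b
  by_cases hab : a = b <;> simp [Matrix.diagonal_apply, hab]

/-- Differentiating the identity `exp X * X = X * exp X`. -/
lemma sylvester (A K : Matrix (Fin m) (Fin m) ℝ) :
    exp A * K + (L A K) * A = A * (L A K) + K * exp A := by
  have h1 : HasFDerivAt (fun X : Matrix (Fin m) (Fin m) ℝ => exp X * X)
      (exp A • ContinuousLinearMap.id ℝ _ + (L A).smulRight A) A :=
    (hasFDerivAt_exp A).mul' (hasFDerivAt_id A)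
  have h2 : HasFDerivAt (fun X : Matrix (Fin m) (Fin m) ℝ => X * exp X)
      (A • (L A) + (ContinuousLinearMap.id ℝ _).smulRight (exp A)) A :=
    (hasFDerivAt_id A).mul' (hasFDerivAt_exp A)
  have hfun : (fun X : Matrix (Fin m) (Fin m) ℝ => exp X * X)
      = fun X => X * exp X := by
    funext X
    exact ((Commute.refl X).exp_left).eq
  rw [hfun] at h1
  have := DFunLike.congr_fun (h1.unique h2) K
  simpa [ContinuousLinearMap.smulRight_apply, smul_eq_mul] using this

/-- Differentiating the identity `exp (X + X) = exp X * exp X`. -/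
lemma doubling (A K : Matrix (Fin m) (Fin m) ℝ) :
    L (A + A) (K + K) = exp A * (L A K) + (L A K) * exp A := by
  have hinner : HasFDerivAt (fun X : Matrix (Fin m) (Fin m) ℝ => X + X)
      (ContinuousLinearMap.id ℝ _ + ContinuousLinearMap.id ℝ _) A :=
    (hasFDerivAt_id A).add (hasFDerivAt_id A)
  have h1 : HasFDerivAt (fun X : Matrix (Fin m) (Fin m) ℝ => exp (X + X))
      ((L (A + A)).comp (ContinuousLinearMap.id ℝ _ + ContinuousLinearMap.id ℝ _)) A := by
    exact HasFDerivAt.comp (f := fun X => X + X) A (hasFDerivAt_exp (A + A)) hinner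
  have h2 : HasFDerivAt (fun X : Matrix (Fin m) (Fin m) ℝ => exp X * exp X)
      (exp A • (L A) + (L A).smulRight (exp A)) A :=
    (hasFDerivAt_exp A).mul' (hasFDerivAt_exp A)
  have hfun : (fun X : Matrix (Fin m) (Fin m) ℝ => exp (X + X))
      = fun X => exp X * exp X := by
    funext X
    exact Matrix.exp_add_of_commute X X (Commute.refl X)
  rw [hfun] at h1
  have := DFunLike.congr_fun (h1.unique h2) K
  simpa [smul_eq_mul] using this

lemma entry_ne (lam : Fin m → ℝ) (K : Matrix (Fin m) (Fin m) ℝ) {j k : Fin m}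
    (h : lam j ≠ lam k) :
    (L (diagonal lam) K) j k
      = (Real.exp (lam j) - Real.exp (lam k)) / (lam j - lam k) * K j k := by
  have hs := sylvester (diagonal lam) K
  have := congr_fun (congr_fun hs j) k
  rw [exp_diag] at this
  simp only [Matrix.add_apply, Matrix.mul_diagonal, Matrix.diagonal_mul] at this
  have hne : lam j - lam k ≠ 0 := sub_ne_zero.2 h
  field_simp
  nlinarith [this]

lemma cont_entry (lam : Fin m → ℝ) (K : Matrix (Fin m) (Fin m) ℝ) (j k : Fin m) :
    Continuous (fun s : ℝ => (L (s • diagonal lam) K) j k) := by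
  have h1 : Continuous fun s : ℝ => s • (diagonal lam : Matrix (Fin m) (Fin m) ℝ) :=
    continuous_id.smul continuous_const
  have h3 : Continuous fun s : ℝ => L (s • diagonal lam) K :=
    ((ContinuousLinearMap.apply ℝ _ K).continuous).comp (continuous_L.comp h1)
  exact ((continuous_apply k).comp ((continuous_apply j).comp h3))

lemma entry_eq (lam : Fin m → ℝ) (K : Matrix (Fin m) (Fin m) ℝ) {j k : Fin m}
    (h : lam j = lam k) :
    (L (diagonal lam) K) j k = Real.exp (lam j) * K j k := by
  set g : ℝ → ℝ := fun s => (L (s • diagonal lam) K) j k with hgdef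
  have hrel : ∀ s : ℝ, g (2 * s) = Real.exp (s * lam j) * g s := by
    intro s
    have hd := doubling (s • diagonal lam) K
    have hAA : (s • diagonal lam : Matrix (Fin m) (Fin m) ℝ) + s • diagonal lam
        = (2 * s) • diagonal lam := by
      rw [← add_smul]; ring_nf
    rw [hAA] at hd
    have hd' := congr_fun (congr_fun hd j) k
    have hmapadd : L ((2 * s) • diagonal lam) (K + K)
        = L ((2 * s) • diagonal lam) K + L ((2 * s) • diagonal lam) K :=
      map_add _ K K
    rw [hmapadd] at hd'
    have hexp : exp (s • (diagonal lam : Matrix (Fin m) (Fin m) ℝ))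
        = diagonal (fun i => Real.exp (s * lam i)) := by rw [smul_diag, exp_diag]
    rw [hexp] at hd'
    simp only [Matrix.add_apply, Matrix.mul_diagonal, Matrix.diagonal_mul] at hd'
    show (L ((2 * s) • diagonal lam) K) j k = Real.exp (s * lam j) * (L (s • diagonal lam) K) j k
    rw [h] at hd' ⊢
    nlinarith [hd']
  have hg0 : g 0 = K j k := by
    have h00 : (0 : ℝ) • (diagonal lam : Matrix (Fin m) (Fin m) ℝ) = 0 := zero_smul _ _
    rw [hgdef]
    simp only [h00, L_zero]
    rfl
  have key : ∀ n : ℕ, g 1 = Real.exp (lam j * (1 - (1/2 : ℝ)^n)) * g ((1/2 : ℝ)^n) := by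
    intro n
    induction n with
    | zero => simp
    | succ n ih =>
        have hs := hrel ((1/2 : ℝ)^(n+1))
        have h2 : (2 : ℝ) * (1/2)^(n+1) = (1/2)^n := by ring
        rw [h2] at hs
        rw [ih, hs, ← mul_assoc, ← Real.exp_add]
        have : lam j * (1 - (1/2 : ℝ)^n) + (1/2 : ℝ)^(n+1) * lam j
            = lam j * (1 - (1/2 : ℝ)^(n+1)) := by ring
        rw [this]
  have hpow : Tendsto (fun n : ℕ => ((1:ℝ)/2)^n) atTop (nhds 0) := by
    apply tendsto_pow_atTop_nhds_zero_of_lt_one <;> norm_num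
  have hφ : Continuous fun t : ℝ => Real.exp (lam j * (1 - t)) * g t :=
    (Real.continuous_exp.comp (continuous_const.mul (continuous_const.sub continuous_id))).mul
      (cont_entry lam K j k)
  have h2 : Tendsto (fun n : ℕ => Real.exp (lam j * (1 - (1/2:ℝ)^n)) * g ((1/2:ℝ)^n)) atTop
      (nhds (Real.exp (lam j * (1 - 0)) * g 0)) := (hφ.tendsto 0).comp hpow
  have h3 : Tendsto (fun _ : ℕ => g 1) atTop (nhds (Real.exp (lam j * (1 - 0)) * g 0)) :=
    h2.congr fun n => (key n).symm
  have h4 : g 1 = Real.exp (lam j * (1 - 0)) * g 0 := tendsto_nhds_unique tendsto_const_nhds h3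
  rw [hg0] at h4
  have hg1 : g 1 = (L (diagonal lam) K) j k := by rw [hgdef]; simp
  rw [← hg1, h4]
  norm_num

/-- The Daleckii–Krein divided-difference matrix. -/
noncomputable def Phi (lam : Fin m → ℝ) : Matrix (Fin m) (Fin m) ℝ :=
  Matrix.of fun j k : Fin m =>
    if lam j = lam k then Real.exp (lam j)
    else (Real.exp (lam j) - Real.exp (lam k)) / (lam j - lam k)

lemma L_diag (lam : Fin m → ℝ) (K : Matrix (Fin m) (Fin m) ℝ) :
    L (diagonal lam) K = Matrix.hadamard (Phi lam) K := by
  funext j k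
  rw [Matrix.hadamard_apply]
  by_cases h : lam j = lam k
  · rw [entry_eq lam K h]
    simp [Phi, h]
  · rw [entry_ne lam K h]
    simp [Phi, h]

/-- The derivative at `G = Q Λ Qᵀ`, as a continuous linear map. -/
noncomputable def D (Q : Matrix (Fin m) (Fin m) ℝ) (lam : Fin m → ℝ) :
    Matrix (Fin m) (Fin m) ℝ →L[ℝ] Matrix (Fin m) (Fin m) ℝ :=
  (Q • ((L (diagonal lam)).comp
    ((Qᵀ • (ContinuousLinearMap.id ℝ (Matrix (Fin m) (Fin m) ℝ))).smulRight Q))).smulRight Qᵀ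

lemma D_apply (Q : Matrix (Fin m) (Fin m) ℝ) (lam : Fin m → ℝ)
    (H : Matrix (Fin m) (Fin m) ℝ) :
    D Q lam H = Q * Matrix.hadamard (Phi lam) (Qᵀ * H * Q) * Qᵀ := by
  simp only [D, ContinuousLinearMap.smulRight_apply, ContinuousLinearMap.smul_apply,
    ContinuousLinearMap.comp_apply, ContinuousLinearMap.id_apply, smul_eq_mul]
  rw [L_diag]

lemma main_linfty (G Q : Matrix (Fin m) (Fin m) ℝ) (lam : Fin m → ℝ)
    (hQ : Qᵀ * Q = 1) (hG : G = Q * Matrix.diagonal lam * Qᵀ) :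
    HasFDerivAt (exp) (D Q lam) G := by
  have hQ' : Q * Qᵀ = 1 := mul_eq_one_comm.mp hQ
  have hQunit : IsUnit Q := IsUnit.of_mul_eq_one Qᵀ hQ'
  have hQinv : Q⁻¹ = Qᵀ := Matrix.inv_eq_left_inv hQ
  have hQG : Qᵀ * G * Q = diagonal lam := by
    rw [hG]
    have : Qᵀ * (Q * diagonal lam * Qᵀ) * Q = (Qᵀ * Q) * diagonal lam * (Qᵀ * Q) := by
      simp only [Matrix.mul_assoc]
    rw [this, hQ, Matrix.one_mul, Matrix.mul_one]
  have hinner : HasFDerivAt (fun X : Matrix (Fin m) (Fin m) ℝ => Qᵀ * X * Q)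
      ((Qᵀ • (ContinuousLinearMap.id ℝ (Matrix (Fin m) (Fin m) ℝ))).smulRight Q) G :=
    ((hasFDerivAt_id G).const_mul Qᵀ).mul_const' Q
  have hmid : HasFDerivAt (fun X : Matrix (Fin m) (Fin m) ℝ => exp (Qᵀ * X * Q))
      ((L (diagonal lam)).comp
        ((Qᵀ • (ContinuousLinearMap.id ℝ (Matrix (Fin m) (Fin m) ℝ))).smulRight Q)) G := by
    have hexpL : HasFDerivAt (exp) (L (diagonal lam)) (Qᵀ * G * Q) := by
      rw [hQG]; exact hasFDerivAt_exp _
    exact HasFDerivAt.comp (f := fun X : Matrix (Fin m) (Fin m) ℝ => Qᵀ * X * Q) G hexpL hinner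
  have houter : HasFDerivAt (fun X : Matrix (Fin m) (Fin m) ℝ => Q * exp (Qᵀ * X * Q) * Qᵀ)
      (D Q lam) G :=
    (hmid.const_mul Q).mul_const' Qᵀ
  have hfun : (fun X : Matrix (Fin m) (Fin m) ℝ => Q * exp (Qᵀ * X * Q) * Qᵀ)
      = exp := by
    funext X
    have hconj : Q * (Qᵀ * X * Q) * Q⁻¹ = X := by
      rw [hQinv]
      have : Q * (Qᵀ * X * Q) * Qᵀ = (Q * Qᵀ) * X * (Q * Qᵀ) := by
        simp only [Matrix.mul_assoc]
      rw [this, hQ', Matrix.one_mul, Matrix.mul_one]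
    have := Matrix.exp_conj Q (Qᵀ * X * Q) hQunit
    rw [hconj] at this
    rw [this, hQinv]
  rw [hfun] at houter
  exact houter



variable {m : ℕ}


noncomputable def pin (A : Matrix (Fin m) (Fin m) ℝ) : ℝ :=
  @norm _ (Matrix.seminormedAddCommGroup :
    SeminormedAddCommGroup (Matrix (Fin m) (Fin m) ℝ)).toNorm A

lemma pin_nonneg (A : Matrix (Fin m) (Fin m) ℝ) : 0 ≤ pin A :=
  @norm_nonneg _ (@SeminormedAddCommGroup.toSeminormedAddGroup _
    (Matrix.seminormedAddCommGroup : SeminormedAddCommGroup (Matrix (Fin m) (Fin m) ℝ))) A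

lemma entry_le_pin (A : Matrix (Fin m) (Fin m) ℝ) (i j : Fin m) : ‖A i j‖ ≤ pin A :=
  Matrix.norm_entry_le_entrywise_sup_norm A

lemma entry_le_linfty (A : Matrix (Fin m) (Fin m) ℝ) (i j : Fin m) : ‖A i j‖ ≤ ‖A‖ := by
  have h1 : ‖A i j‖₊ ≤ ∑ j' : Fin m, ‖A i j'‖₊ :=
    Finset.single_le_sum (f := fun j' => ‖A i j'‖₊) (fun _ _ => zero_le) (Finset.mem_univ j)
  have h2 : (∑ j' : Fin m, ‖A i j'‖₊) ≤ (Finset.univ : Finset (Fin m)).sup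
      fun i : Fin m => ∑ j' : Fin m, ‖A i j'‖₊ :=
    Finset.le_sup (f := fun i => ∑ j' : Fin m, ‖A i j'‖₊) (Finset.mem_univ i)
  rw [Matrix.linfty_opNorm_def]
  exact_mod_cast h1.trans h2

lemma pin_le_linfty (A : Matrix (Fin m) (Fin m) ℝ) : pin A ≤ ‖A‖ :=
  (Matrix.norm_le_iff (norm_nonneg A)).mpr fun i j => entry_le_linfty A i j

lemma linfty_le_pin (A : Matrix (Fin m) (Fin m) ℝ) : ‖A‖ ≤ (m : ℝ) * pin A := by
  rw [Matrix.linfty_opNorm_def]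
  have hb : (0:ℝ) ≤ (m : ℝ) * pin A := mul_nonneg (Nat.cast_nonneg m) (pin_nonneg A)
  rw [← Real.coe_toNNReal _ hb, NNReal.coe_le_coe]
  apply Finset.sup_le
  intro i _
  rw [← NNReal.coe_le_coe, Real.coe_toNNReal _ hb, NNReal.coe_sum]
  calc (∑ j : Fin m, ((‖A i j‖₊ : ℝ≥0) : ℝ)) = ∑ j : Fin m, ‖A i j‖ := by
        simp [coe_nnnorm]
    _ ≤ ∑ _j : Fin m, pin A := Finset.sum_le_sum fun j _ => entry_le_pin A i j
    _ = (m : ℝ) * pin A := by simp [mul_comm]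

lemma transport
    (pin_nonneg : ∀ A : Matrix (Fin m) (Fin m) ℝ, 0 ≤ pin A)
    (pin_le_linfty : ∀ A : Matrix (Fin m) (Fin m) ℝ, pin A ≤ ‖A‖)
    (linfty_le_pin : ∀ A : Matrix (Fin m) (Fin m) ℝ, ‖A‖ ≤ (m : ℝ) * pin A)
    {f : Matrix (Fin m) (Fin m) ℝ → Matrix (Fin m) (Fin m) ℝ}
    {D : Matrix (Fin m) (Fin m) ℝ →L[ℝ] Matrix (Fin m) (Fin m) ℝ}
    {x : Matrix (Fin m) (Fin m) ℝ} (h : HasFDerivAt f D x) :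
    @HasFDerivAt ℝ _ _ (@NormedAddCommGroup.toAddCommGroup _ Matrix.normedAddCommGroup)
      (@NormedSpace.toModule ℝ _ _ _ Matrix.normedSpace)
      (@UniformSpace.toTopologicalSpace _ (@PseudoMetricSpace.toUniformSpace _
        (@MetricSpace.toPseudoMetricSpace _ (@NormedAddCommGroup.toMetricSpace _
          Matrix.normedAddCommGroup))))
      _ (@NormedAddCommGroup.toAddCommGroup _ Matrix.normedAddCommGroup)
      (@NormedSpace.toModule ℝ _ _ _ Matrix.normedSpace)
      (@UniformSpace.toTopologicalSpace _ (@PseudoMetricSpace.toUniformSpace _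
        (@MetricSpace.toPseudoMetricSpace _ (@NormedAddCommGroup.toMetricSpace _
          Matrix.normedAddCommGroup)))) f D x := by
  replace h := (hasFDerivAt_iff_tendsto (E := Matrix (Fin m) (Fin m) ℝ)
    (F := Matrix (Fin m) (Fin m) ℝ) (f := f) (f' := D) (x := x)).mp h
  refine (@hasFDerivAt_iff_tendsto ℝ _ _ Matrix.normedAddCommGroup Matrix.normedSpace
      _ Matrix.normedAddCommGroup Matrix.normedSpace f D x).mpr ?_
  set C : ℝ := (m : ℝ) + 1 with hC
  have hC0 : (0:ℝ) < C := by positivity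
  have hle : ∀ A : Matrix (Fin m) (Fin m) ℝ, ‖A‖ ≤ C * pin A := by
    intro A
    refine (linfty_le_pin A).trans ?_
    have := pin_nonneg A
    nlinarith
  have hbound : ∀ y : Matrix (Fin m) (Fin m) ℝ,
      (pin (y - x))⁻¹ * pin (f y - f x - D (y - x))
        ≤ C * (‖y - x‖⁻¹ * ‖f y - f x - D (y - x)‖) := by
    intro y
    by_cases ha : y - x = 0
    · simp only [ha]
      have h0 : pin (0 : Matrix (Fin m) (Fin m) ℝ) = 0 := by
        have := @norm_zero (Matrix (Fin m) (Fin m) ℝ)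
          (@SeminormedAddCommGroup.toSeminormedAddGroup _ (Matrix.seminormedAddCommGroup)) 
        exact this
      rw [h0, _root_.inv_zero, zero_mul]
      positivity
    · have hq : 0 < ‖y - x‖ := norm_pos_iff.mpr ha
      have hp : 0 < pin (y - x) := lt_of_lt_of_le (div_pos hq hC0)
        (by rw [div_le_iff₀ hC0]; nlinarith [hle (y - x)])
      set p := pin (y - x)
      set q := ‖y - x‖
      set r := pin (f y - f x - D (y - x))
      set s := ‖f y - f x - D (y - x)‖
      have hrs : r ≤ s := pin_le_linfty _
      have hqCp : q ≤ C * p := hle _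
      have hr0 : 0 ≤ r := pin_nonneg _
      have hs0 : (0:ℝ) ≤ s := norm_nonneg _
      rw [inv_mul_eq_div, div_le_iff₀ hp]
      have hrhs : C * (q⁻¹ * s) * p = (C * s * p) / q := by field_simp
      rw [hrhs, le_div_iff₀ hq]
      nlinarith [mul_le_mul hrs hqCp hq.le hs0]
  refine squeeze_zero (fun y => mul_nonneg (inv_nonneg.mpr (pin_nonneg _)) (pin_nonneg _)) hbound ?_
  have h2 := h.const_mul C
  rw [mul_zero] at h2
  exact h2


end DaleckiiKrein

open Matrix NormedSpace

attribute [local instance] Matrix.normedAddCommGroup Matrix.normedSpace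

/-- The matrix exponential is Fréchet differentiable at a symmetric matrix `G = Q Λ Qᵀ`, with
derivative `H ↦ Q (Φ ∘ (Qᵀ H Q)) Qᵀ`, where `∘` is the Hadamard product and `Φ` is the matrix
of divided differences of the scalar exponential at the eigenvalues of `G`. -/
theorem matrix_exp_fderiv_daleckii_krein
    {m : ℕ} (G Q : Matrix (Fin m) (Fin m) ℝ) (lam : Fin m → ℝ)
    (hQ : Qᵀ * Q = 1) (hG : G = Q * Matrix.diagonal lam * Qᵀ) :
    ∃ D : Matrix (Fin m) (Fin m) ℝ →L[ℝ] Matrix (Fin m) (Fin m) ℝ,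
      HasFDerivAt (exp : Matrix (Fin m) (Fin m) ℝ → Matrix (Fin m) (Fin m) ℝ) D G
      ∧ ∀ H : Matrix (Fin m) (Fin m) ℝ,
          D H = Q * (Matrix.hadamard
              (Matrix.of fun j k : Fin m =>
                if lam j = lam k then Real.exp (lam j)
                else (Real.exp (lam j) - Real.exp (lam k)) / (lam j - lam k))
              (Qᵀ * H * Q)) * Qᵀ := by
  refine ⟨DaleckiiKrein.D Q lam, ?_, ?_⟩
  · exact DaleckiiKrein.transport DaleckiiKrein.pin_nonneg DaleckiiKrein.pin_le_linfty
      DaleckiiKrein.linfty_le_pin (DaleckiiKrein.main_linfty G Q lam hQ hG)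
  · intro H
    exact DaleckiiKrein.D_apply Q lam H
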